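/- If for all sets S ⊆ F_q^n of size q^{δn} (δ ∈ [0,1]) there exists a surjective linear map φ: F_q^n → F_q^{n−k} with H_∞^q(φ(U_S)) ≥ δ(n−k) − D for some constant D ≥ 0, then every (k,m)-Furstenberg set S ⊆ F_q^n satisfies |S| ≥ q^{−(n/k)·D} · m^{n/k}. -/

import Mathlib

/-- The `q`-ary min-entropy of a random variable (probability mass function) `p`:
`H_∞^q(p) = −log_q (max_w Pr[p = w])`. -/
noncomputable def minEntropy {α : Type*} (q : ℕ) (p : PMF α) : ℝ :=
  - Real.logb q (⨆ w : α, (p w).toReal)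

lemma aux_ker_rank {F : Type*} [Field F] {n k : ℕ} (hkn : k < n)
    (φ : (Fin n → F) →ₗ[F] (Fin (n-k) → F)) (hφ : Function.Surjective φ) :
    Module.finrank F (LinearMap.ker φ) = k := by
  have h := LinearMap.finrank_range_add_finrank_ker φ
  rw [LinearMap.range_eq_top.2 hφ, finrank_top] at h
  simp [Module.finrank_fin_fun] at h
  omega

open Classical in
lemma aux_pmf {F : Type*} [Field F] [Fintype F] {n k : ℕ}
    (φ : (Fin n → F) →ₗ[F] (Fin (n-k) → F)) (S : Finset (Fin n → F)) (hS : S.Nonempty)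
    (v : Fin n → F) :
    ((S.filter (fun x => x - v ∈ LinearMap.ker φ)).card : ENNReal) / S.card
      ≤ ((PMF.uniformOfFinset S hS).map φ) (φ v) := by
  set T := S.filter (fun x => x - v ∈ LinearMap.ker φ) with hTdef
  rw [PMF.map_apply]
  refine le_trans ?_ (ENNReal.sum_le_tsum T)
  have hc : (T.card : ENNReal)/S.card = ∑ _a ∈ T, (S.card:ENNReal)⁻¹ := by
    rw [Finset.sum_const, nsmul_eq_mul, div_eq_mul_inv]
  rw [hc]
  refine Finset.sum_le_sum ?_
  intro a ha
  rw [hTdef, Finset.mem_filter] at ha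
  have h1 : φ v = φ a := by
    have := ha.2
    rw [LinearMap.mem_ker, map_sub, sub_eq_zero] at this
    exact this.symm
  rw [if_pos h1, PMF.uniformOfFinset_apply, if_pos ha.1]

open Classical in
/-- From the entropic statement to the Furstenberg set bound: if for every set `S ⊆ F_q^n`
of size `q^{δn}` (`δ ∈ [0,1]`) there is a surjective linear map `φ : F_q^n → F_q^{n−k}`
with `H_∞^q(φ(U_S)) ≥ δ(n−k) − D` (`D ≥ 0`), then every `(k,m)`-Furstenberg set `S`
satisfies `|S| ≥ q^{−(n/k)·D} · m^{n/k}`. -/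
theorem entropic_to_furstenberg {F : Type*} [Field F] [Fintype F] (q n k : ℕ)
    (hq : Fintype.card F = q) (hk : 1 ≤ k) (hkn : k < n) (D : ℝ) (hD : 0 ≤ D)
    (hEnt : ∀ δ : ℝ, 0 ≤ δ → δ ≤ 1 →
      ∀ (S : Finset (Fin n → F)) (hS : S.Nonempty), (S.card : ℝ) = (q : ℝ) ^ (δ * n) →
        ∃ φ : (Fin n → F) →ₗ[F] (Fin (n - k) → F), Function.Surjective φ ∧
          δ * ((n : ℝ) - k) - D ≤ minEntropy q ((PMF.uniformOfFinset S hS).map φ)) :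
    ∀ m : ℕ, 1 ≤ m → m ≤ q ^ k → ∀ S : Finset (Fin n → F),
      (∀ W : Submodule F (Fin n → F), Module.finrank F W = k →
        ∃ v : Fin n → F, m ≤ (S.filter (fun x => x - v ∈ W)).card) →
      (q : ℝ) ^ (-((n : ℝ) / k) * D) * (m : ℝ) ^ ((n : ℝ) / k) ≤ S.card := by
  intro m hm hmq S hFur
  have hq2 : 1 < q := hq ▸ Fintype.one_lt_card
  have hq1 : (1:ℝ) < q := by exact_mod_cast hq2
  have hq0 : (0:ℝ) < q := lt_trans one_pos hq1
  have hn0 : 0 < n := by omega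
  have hnR : (0:ℝ) < n := by exact_mod_cast hn0
  have hkR : (0:ℝ) < k := by exact_mod_cast hk
  -- S is nonempty
  obtain ⟨ψ, hψ⟩ : ∃ ψ : (Fin n → F) →ₗ[F] (Fin (n-k) → F), Function.Surjective ψ :=
    ⟨LinearMap.funLeft F F (Fin.castLE (Nat.sub_le n k)),
      LinearMap.funLeft_surjective_of_injective F F _ (Fin.castLE_injective _)⟩
  obtain ⟨v0, hv0⟩ := hFur (LinearMap.ker ψ) (aux_ker_rank hkn ψ hψ)
  have hS : S.Nonempty := by
    rw [← Finset.card_pos]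
    exact lt_of_lt_of_le hm (le_trans hv0 (Finset.card_filter_le _ _))
  have hScard : (0:ℝ) < S.card := by exact_mod_cast Finset.card_pos.mpr hS
  set L := Real.logb q S.card with hLdef
  set δ := L / n with hδdef
  have hδn : δ * n = L := div_mul_cancel₀ L (ne_of_gt hnR)
  have hcard : (S.card : ℝ) = (q:ℝ) ^ (δ * n) := by
    rw [hδn]; exact (Real.rpow_logb hq0 (ne_of_gt hq1) hScard).symm
  have hS1 : (1:ℝ) ≤ S.card := by exact_mod_cast Finset.card_pos.mpr hS
  have hL0 : 0 ≤ L := Real.logb_nonneg hq1 hS1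
  have hδ0 : 0 ≤ δ := div_nonneg hL0 hnR.le
  have hδ1 : δ ≤ 1 := by
    rw [hδdef, div_le_one hnR]
    have h1 : (S.card : ℝ) ≤ (q:ℝ)^n := by
      have h2 : Fintype.card (Fin n → F) = q ^ n := by simp [hq]
      calc (S.card:ℝ) ≤ Fintype.card (Fin n → F) := by exact_mod_cast Finset.card_le_univ S
        _ = (q:ℝ)^n := by exact_mod_cast h2
    calc L ≤ Real.logb q ((q:ℝ)^n) := Real.logb_le_logb_of_le hq1 hScard h1
      _ = n := by rw [Real.logb_pow, Real.logb_self_eq_one hq1]; ring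
  obtain ⟨φ, hφs, hφe⟩ := hEnt δ hδ0 hδ1 S hS hcard
  obtain ⟨v, hv⟩ := hFur (LinearMap.ker φ) (aux_ker_rank hkn φ hφs)
  set T := S.filter (fun x => x - v ∈ LinearMap.ker φ) with hTdef
  have hpmf := aux_pmf φ S hS v
  have hle1 : ((PMF.uniformOfFinset S hS).map φ) (φ v) ≤ 1 := PMF.coe_le_one _ _
  have hne : ((PMF.uniformOfFinset S hS).map φ) (φ v) ≠ ⊤ :=
    ne_top_of_le_ne_top ENNReal.one_ne_top hle1
  have hreal : (T.card : ℝ)/S.card ≤ (((PMF.uniformOfFinset S hS).map φ) (φ v)).toReal := by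
    have := ENNReal.toReal_mono hne hpmf
    rwa [ENNReal.toReal_div, ENNReal.toReal_natCast, ENNReal.toReal_natCast] at this
  have hmT : (m:ℝ)/S.card ≤ (((PMF.uniformOfFinset S hS).map φ) (φ v)).toReal := by
    refine le_trans ?_ hreal
    exact div_le_div_of_nonneg_right (by exact_mod_cast hv) hScard.le
  have hsup : (m:ℝ)/S.card ≤ ⨆ w, ((((PMF.uniformOfFinset S hS).map φ)) w).toReal :=
    le_trans hmT (le_ciSup (f := fun w => ((((PMF.uniformOfFinset S hS).map φ)) w).toReal)
      (Set.Finite.bddAbove (Set.finite_range _)) (φ v))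
  have hm' : (0:ℝ) < m := by exact_mod_cast hm
  have hA0 : (0:ℝ) < (m:ℝ)/S.card := div_pos hm' hScard
  have hent2 : minEntropy q ((PMF.uniformOfFinset S hS).map φ) ≤ L - Real.logb q m := by
    unfold minEntropy
    have h1 : Real.logb q ((m:ℝ)/S.card)
        ≤ Real.logb q (⨆ w, ((((PMF.uniformOfFinset S hS).map φ)) w).toReal) :=
      Real.logb_le_logb_of_le hq1 hA0 hsup
    have h2 : Real.logb q ((m:ℝ)/S.card) = Real.logb q m - L := by
      rw [Real.logb_div (ne_of_gt hm') (ne_of_gt hScard)]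
    linarith
  have hkey : Real.logb q m - D ≤ δ * k := by
    have h3 := le_trans hφe hent2
    have h4 : δ * ((n:ℝ) - k) = δ * n - δ * k := by ring
    rw [h4, hδn] at h3
    linarith
  have hexp : -((n:ℝ)/k) * D + (n:ℝ)/k * Real.logb q m ≤ δ * n := by
    have h3 : (n:ℝ)/k * (Real.logb q m - D) ≤ (n:ℝ)/k * (δ*k) :=
      mul_le_mul_of_nonneg_left hkey (by positivity)
    have h4 : (n:ℝ)/k * (δ*k) = δ * n := by field_simp
    have h5 : -((n:ℝ)/k)*D + (n:ℝ)/k * Real.logb q m = (n:ℝ)/k * (Real.logb q m - D) := by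
      ring
    linarith
  rw [hcard]
  calc (q:ℝ)^(-((n:ℝ)/k)*D) * (m:ℝ)^((n:ℝ)/k)
      = (q:ℝ)^(-((n:ℝ)/k)*D) * ((q:ℝ)^(Real.logb q m))^((n:ℝ)/k) := by
        rw [Real.rpow_logb hq0 (ne_of_gt hq1) hm']
    _ = (q:ℝ)^(-((n:ℝ)/k)*D + (n:ℝ)/k * Real.logb q m) := by
        rw [← Real.rpow_mul hq0.le, ← Real.rpow_add hq0]
        ring_nf
    _ ≤ (q:ℝ)^(δ*n) := Real.rpow_le_rpow_of_exponent_le hq1.le hexp
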